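/- Let q be a power of a prime p, C ≥ 1, and α > 0 sufficiently small. Suppose F_1, …, F_n ⊆ [n] satisfy |F_i| < αn and every index i ∈ [n] is contained in at most (1 − 12α)n of the sets F_j. Let X_1, …, X_m be independent random vectors in F_q^n, where X_i is a near uniform vector of type F_i with constant C, and m ≥ (1 − 6α)n. Then there exist constants C' > 0 and c > 0 such that with probability at least 1 − (C'/q)^{cn} with respect to X_1, …, X_m, every nonzero vector a = (a_1, …, a_n) ∈ F_q^n orthogonal to all of X_1, …, X_m satisfies ρ_{F_{m+1}}(a) ≤ (C'/q)^{cn}. -/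

import Mathlib

open MeasureTheory ProbabilityTheory Matrix Finset

/-- `e_p(x) = exp(2πi x/p)` for `x ∈ F_p = ZMod p`. -/
noncomputable def ep (p : ℕ) (x : ZMod p) : ℂ :=
  Complex.exp (2 * Real.pi * Complex.I * ((x.val : ℂ) / p))

set_option linter.unusedSectionVars false
set_option maxHeartbeats 1000000



section chars
variable {p : ℕ} [hp : Fact p.Prime]

lemma ep_eq_pow (x : ZMod p) :
    ep p x = Complex.exp (2 * Real.pi * Complex.I / p) ^ (x.val) := by
  rw [ep, ← Complex.exp_nat_mul]
  ring_nf

lemma ep_prim : IsPrimitiveRoot (Complex.exp (2 * Real.pi * Complex.I / p)) p :=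
  Complex.isPrimitiveRoot_exp p hp.out.ne_zero

lemma ep_add (x y : ZMod p) : ep p (x + y) = ep p x * ep p y := by
  rw [ep_eq_pow, ep_eq_pow, ep_eq_pow, ← pow_add]
  rw [ZMod.val_add]
  conv_rhs => rw [show x.val + y.val = p * ((x.val + y.val) / p) + (x.val + y.val) % p from (Nat.div_add_mod _ _).symm]
  rw [pow_add, pow_mul, ep_prim.pow_eq_one, one_pow, one_mul]

lemma ep_zero : ep p 0 = 1 := by
  simp [ep, ZMod.val_zero]

lemma norm_ep (x : ZMod p) : ‖ep p x‖ = 1 := by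
  rw [ep]
  rw [show 2 * Real.pi * Complex.I * ((x.val : ℂ) / p) = ((2 * Real.pi * x.val / p : ℝ) : ℂ) * Complex.I by push_cast; ring]
  exact Complex.norm_exp_ofReal_mul_I _

lemma ep_ne_one {x : ZMod p} (hx : x ≠ 0) : ep p x ≠ 1 := by
  rw [ep_eq_pow]
  intro h
  have hdvd := (ep_prim.pow_eq_one_iff_dvd x.val).mp h
  have hlt := ZMod.val_lt x
  haveI : NeZero p := ⟨hp.out.ne_zero⟩
  have hne : x.val ≠ 0 := fun h0 => hx ((ZMod.val_eq_zero x).mp h0)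
  exact hne (Nat.eq_zero_of_dvd_of_lt hdvd hlt |> fun h => h)

lemma conj_ep (x : ZMod p) : (starRingEnd ℂ) (ep p x) = ep p (-x) := by
  have h1 : ep p x * ep p (-x) = 1 := by rw [← ep_add]; simp [ep_zero]
  have h2 : (starRingEnd ℂ) (ep p x) = (ep p x)⁻¹ := Complex.inv_eq_conj (norm_ep x) |>.symm
  rw [h2]
  exact (eq_inv_of_mul_eq_one_right h1).symm

end chars

section field
variable {p : ℕ} [hp : Fact p.Prime] {F : Type} [Field F] [Fintype F] [DecidableEq F]
  [CharP F p] [Algebra (ZMod p) F]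

lemma trace_nondeg (d : F) (hd : d ≠ 0) : ∃ b : F, Algebra.trace (ZMod p) F (d * b) ≠ 0 := by
  have h : ringChar F = p := ringChar.eq F p
  subst h
  exact FiniteField.trace_to_zmod_nondegenerate F hd

lemma sum_ep_tr (d : F) (hd : d ≠ 0) :
    ∑ s : F, ep p (Algebra.trace (ZMod p) F (d * s)) = 0 := by
  obtain ⟨b, hb⟩ := trace_nondeg (p := p) d hd
  have hshift : ep p (Algebra.trace (ZMod p) F (d * b)) *
      (∑ s : F, ep p (Algebra.trace (ZMod p) F (d * s))) =
      ∑ s : F, ep p (Algebra.trace (ZMod p) F (d * s)) := by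
    rw [Finset.mul_sum]
    apply Fintype.sum_equiv (Equiv.addLeft b)
    intro s
    simp only [Equiv.coe_addLeft]
    rw [← ep_add, ← map_add]
    congr 2
    ring
  by_contra hne
  nth_rewrite 2 [show (∑ s : F, ep p (Algebra.trace (ZMod p) F (d * s))) = 1 * ∑ s : F, ep p (Algebra.trace (ZMod p) F (d * s)) from (one_mul _).symm] at hshift
  have := mul_right_cancel₀ hne hshift
  exact ep_ne_one hb this
end field

section field
variable {p : ℕ} [hp : Fact p.Prime] {F : Type} [Field F] [Fintype F] [DecidableEq F]
  [CharP F p] [Algebra (ZMod p) F]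


lemma sum_ep_tr_ite (d : F) :
    ∑ s : F, ep p (Algebra.trace (ZMod p) F (d * s)) =
      if d = 0 then (Fintype.card F : ℂ) else 0 := by
  split_ifs with h
  · subst h; simp [ep_zero]
  · exact sum_ep_tr d h

lemma parseval (w : F → ℝ) :
    ∑ s : F, ‖∑ k : F, (w k : ℂ) * ep p (Algebra.trace (ZMod p) F (k * s))‖ ^ 2
      = (Fintype.card F : ℝ) * ∑ k : F, (w k) ^ 2 := by
  have key : ∀ s : F,
      (‖∑ k : F, (w k : ℂ) * ep p (Algebra.trace (ZMod p) F (k * s))‖ ^ 2 : ℂ)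
        = ∑ k : F, ∑ k' : F, (w k : ℂ) * (w k') *
            ep p (Algebra.trace (ZMod p) F ((k - k') * s)) := by
    intro s
    rw [← Complex.mul_conj']
    rw [map_sum, Finset.sum_mul_sum]
    apply Finset.sum_congr rfl; intro k _
    apply Finset.sum_congr rfl; intro k' _
    rw [map_mul (starRingEnd ℂ), Complex.conj_ofReal, conj_ep]
    have : Algebra.trace (ZMod p) F ((k - k') * s)
        = Algebra.trace (ZMod p) F (k * s) + -(Algebra.trace (ZMod p) F (k' * s)) := by
      rw [← map_neg, ← map_add]
      congr 1
      ring
    rw [this, ep_add]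
    ring
  have : ((∑ s : F, ‖∑ k : F, (w k : ℂ) * ep p (Algebra.trace (ZMod p) F (k * s))‖ ^ 2 : ℝ) : ℂ)
      = ((Fintype.card F : ℝ) * ∑ k : F, (w k) ^ 2 : ℝ) := by
    push_cast
    rw [Finset.sum_congr rfl (fun s _ => key s)]
    rw [Finset.sum_comm]
    have inner : ∀ k : F, (∑ s : F, ∑ k' : F, (w k : ℂ) * (w k') *
        ep p (Algebra.trace (ZMod p) F ((k - k') * s))) = (w k : ℂ) * w k * Fintype.card F := by
      intro k
      rw [Finset.sum_comm]
      have : ∀ k' : F, (∑ s : F, (w k : ℂ) * (w k') *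
          ep p (Algebra.trace (ZMod p) F ((k - k') * s)))
          = (w k : ℂ) * (w k') * (if k' = k then (Fintype.card F : ℂ) else 0) := by
        intro k'
        rw [← Finset.mul_sum, sum_ep_tr_ite]
        congr 1
        exact if_congr (by constructor <;> intro h <;> [exact (sub_eq_zero.mp h).symm; simp [h]]) rfl rfl

      rw [Finset.sum_congr rfl (fun k' _ => this k')]
      simp [mul_ite]
    rw [Finset.sum_congr rfl (fun k _ => inner k), ← Finset.sum_mul]
    ring
  exact_mod_cast this
end field

section field
variable {p : ℕ} [hp : Fact p.Prime] {F : Type} [Field F] [Fintype F] [DecidableEq F]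
  [CharP F p] [Algebra (ZMod p) F]


lemma sum_f_le (C : ℝ) (w : F → ℝ) (hw0 : ∀ k, 0 ≤ w k)
    (hw1 : ∑ k : F, w k = 1) (hwC : ∀ k, w k ≤ C / (Fintype.card F : ℝ)) :
    ∑ s : F, ‖∑ k : F, (w k : ℂ) * ep p (Algebra.trace (ZMod p) F (k * s))‖
      ≤ Real.sqrt (C * Fintype.card F) := by
  set q : ℝ := (Fintype.card F : ℝ) with hq
  have hq1 : (1 : ℝ) ≤ q := by
    exact_mod_cast Nat.one_le_cast.mpr Fintype.card_pos
  have hq0 : (0:ℝ) < q := lt_of_lt_of_le one_pos hq1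
  set f : F → ℝ := fun s => ‖∑ k : F, (w k : ℂ) * ep p (Algebra.trace (ZMod p) F (k * s))‖ with hf
  have hsq : (∑ s : F, f s) ^ 2 ≤ q * ∑ s : F, f s ^ 2 := by
    have := sq_sum_le_card_mul_sum_sq (s := (univ : Finset F)) (f := f)
    simpa [hq] using this
  have hpar : ∑ s : F, f s ^ 2 = q * ∑ k : F, (w k) ^ 2 := parseval w
  have hwsq : ∑ k : F, (w k) ^ 2 ≤ C / q := by
    calc ∑ k : F, (w k) ^ 2 ≤ ∑ k : F, (C / q) * w k := by
          apply Finset.sum_le_sum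
          intro k _
          rw [pow_two]
          exact mul_le_mul_of_nonneg_right (hwC k) (hw0 k)
      _ = C / q := by rw [← Finset.mul_sum, hw1, mul_one]
  have hbound : (∑ s : F, f s) ^ 2 ≤ C * q := by
    calc (∑ s : F, f s) ^ 2 ≤ q * (q * ∑ k : F, (w k) ^ 2) := by rw [← hpar]; exact hsq
      _ ≤ q * (q * (C / q)) := by
          apply mul_le_mul_of_nonneg_left (mul_le_mul_of_nonneg_left hwsq (le_of_lt hq0)) (le_of_lt hq0)
      _ = C * q := by field_simp
  have hnn : 0 ≤ ∑ s : F, f s := Finset.sum_nonneg fun s _ => norm_nonneg _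
  calc ∑ s : F, f s = Real.sqrt ((∑ s : F, f s) ^ 2) := (Real.sqrt_sq hnn).symm
    _ ≤ Real.sqrt (C * q) := Real.sqrt_le_sqrt hbound
end field

section field
variable {p : ℕ} [hp : Fact p.Prime] {F : Type} [Field F] [Fintype F] [DecidableEq F]
  [CharP F p] [Algebra (ZMod p) F]


variable {n : ℕ}

/-- master identity -/
lemma sum_prod_eq (h : Fin n → F → ℝ) :
    ∑ a : Fin n → F, ∏ i : Fin n, h i (a i) = ∏ i : Fin n, ∑ b : F, h i b := by
  rw [Finset.prod_univ_sum]
  rw [Fintype.piFinset_univ]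

lemma sum_rho_le (C : ℝ) (hC : 1 ≤ C) (Fs : Finset (Fin n)) (w : Fin n → F → ℝ)
    (hw0 : ∀ i k, 0 ≤ w i k) (hw1 : ∀ i, ∑ k : F, w i k = 1)
    (hwC : ∀ i, i ∉ Fs → ∀ k, w i k ≤ C / (Fintype.card F : ℝ)) :
    ∑ a : Fin n → F, ((Fintype.card F : ℝ)⁻¹ *
        ∑ t ∈ Finset.univ.erase (0 : F), ∏ i ∈ Finset.univ \ Fs,
          ‖∑ k : F, (w i k : ℂ) * ep p (Algebra.trace (ZMod p) F (k * (t * a i)))‖)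
      ≤ Real.sqrt (C * Fintype.card F) ^ n * (Fintype.card F : ℝ) ^ Fs.card := by
  classical
  set q : ℝ := (Fintype.card F : ℝ) with hqdef
  have hq1 : (1 : ℝ) ≤ q := by exact_mod_cast Nat.one_le_cast.mpr Fintype.card_pos
  have hq0 : (0:ℝ) < q := lt_of_lt_of_le one_pos hq1
  set f : Fin n → F → ℝ := fun i s => ‖∑ k : F, (w i k : ℂ) * ep p (Algebra.trace (ZMod p) F (k * s))‖ with hfdef
  set M : ℝ := Real.sqrt (C * q) ^ n * q ^ Fs.card with hM
  have hsqrt1 : (1:ℝ) ≤ Real.sqrt (C * q) := by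
    rw [show (1:ℝ) = Real.sqrt 1 from (Real.sqrt_one).symm]
    apply Real.sqrt_le_sqrt
    nlinarith
  -- key: for each t ≠ 0, the sum over a is at most M
  have key : ∀ t ∈ Finset.univ.erase (0 : F),
      ∑ a : Fin n → F, ∏ i ∈ Finset.univ \ Fs, f i (t * a i) ≤ M := by
    intro t ht
    have ht0 : t ≠ 0 := (Finset.mem_erase.mp ht).1
    set h : Fin n → F → ℝ := fun i b => if i ∈ Finset.univ \ Fs then f i (t * b) else 1 with hh
    have step1 : ∀ a : Fin n → F, ∏ i ∈ Finset.univ \ Fs, f i (t * a i) = ∏ i : Fin n, h i (a i) := by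
      intro a
      rw [hh]
      rw [Finset.prod_ite_mem Finset.univ (Finset.univ \ Fs) (fun i => f i (t * a i))]
      simp [Finset.inter_comm]
    rw [Finset.sum_congr rfl (fun a _ => step1 a), sum_prod_eq]
    rw [← Finset.prod_sdiff (Finset.subset_univ Fs)]
    have hgeq : ∀ i ∈ Finset.univ \ Fs, (∑ b : F, h i b) = ∑ s : F, f i s := by
      intro i hi
      have : ∀ b : F, h i b = f i (t * b) := by intro b; rw [hh]; simp only [if_pos hi]
      rw [Finset.sum_congr rfl (fun b _ => this b)]
      exact Fintype.sum_equiv (Equiv.mulLeft₀ t ht0) _ _ (fun b => rfl)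
    have hfle : ∀ i ∈ Finset.univ \ Fs, (∑ b : F, h i b) ≤ Real.sqrt (C * q) := by
      intro i hi
      rw [hgeq i hi]
      have hiFs : i ∉ Fs := (Finset.mem_sdiff.mp hi).2
      exact sum_f_le C (w i) (hw0 i) (hw1 i) (hwC i hiFs)
    have hA : ∏ i ∈ Finset.univ \ Fs, (∑ b : F, h i b) ≤ Real.sqrt (C * q) ^ n := by
      calc ∏ i ∈ Finset.univ \ Fs, (∑ b : F, h i b)
          ≤ ∏ _i ∈ Finset.univ \ Fs, Real.sqrt (C * q) := by
            apply Finset.prod_le_prod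
            · intro i hi; rw [hgeq i hi]; exact Finset.sum_nonneg fun s _ => norm_nonneg _
            · exact hfle
        _ = Real.sqrt (C * q) ^ (Finset.univ \ Fs).card := by rw [Finset.prod_const]
        _ ≤ Real.sqrt (C * q) ^ n := by
            apply pow_le_pow_right₀ hsqrt1
            calc (Finset.univ \ Fs).card ≤ (Finset.univ : Finset (Fin n)).card :=
                  Finset.card_le_card (Finset.sdiff_subset)
              _ = n := by simp
    have hB : ∏ i ∈ Fs, (∑ b : F, h i b) = q ^ Fs.card := by
      have : ∀ i ∈ Fs, (∑ b : F, h i b) = q := by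
        intro i hi
        have hnot : i ∉ Finset.univ \ Fs := by simp [hi]
        have : ∀ b : F, h i b = 1 := by intro b; rw [hh]; simp only [if_neg hnot]
        rw [Finset.sum_congr rfl (fun b _ => this b), Finset.sum_const, nsmul_eq_mul, mul_one, hqdef]
        simp
      rw [Finset.prod_congr rfl this, Finset.prod_const]
    rw [hM, hB]
    apply mul_le_mul_of_nonneg_right hA (by positivity)
  have nonneg : ∀ t ∈ Finset.univ.erase (0:F), 0 ≤ ∑ a : Fin n → F, ∏ i ∈ Finset.univ \ Fs, f i (t * a i) := by
    intro t _
    apply Finset.sum_nonneg; intro a _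
    apply Finset.prod_nonneg; intro i _
    exact norm_nonneg _
  calc ∑ a : Fin n → F, (q⁻¹ * ∑ t ∈ Finset.univ.erase (0 : F), ∏ i ∈ Finset.univ \ Fs, f i (t * a i))
      = q⁻¹ * ∑ t ∈ Finset.univ.erase (0 : F), ∑ a : Fin n → F, ∏ i ∈ Finset.univ \ Fs, f i (t * a i) := by
        rw [← Finset.mul_sum]
        rw [Finset.sum_comm]
    _ ≤ q⁻¹ * ((Finset.univ.erase (0:F)).card * M) := by
        apply mul_le_mul_of_nonneg_left _ (by positivity)
        calc ∑ t ∈ Finset.univ.erase (0 : F), ∑ a : Fin n → F, ∏ i ∈ Finset.univ \ Fs, f i (t * a i)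
            ≤ ∑ _t ∈ Finset.univ.erase (0 : F), M := Finset.sum_le_sum key
          _ = (Finset.univ.erase (0:F)).card * M := by rw [Finset.sum_const, nsmul_eq_mul]
    _ ≤ q⁻¹ * (q * M) := by
        apply mul_le_mul_of_nonneg_left _ (by positivity)
        apply mul_le_mul_of_nonneg_right _ (by positivity)
        calc ((Finset.univ.erase (0:F)).card : ℝ) ≤ (Finset.univ : Finset F).card := by
              exact_mod_cast Nat.cast_le.mpr (Finset.card_le_card (Finset.erase_subset _ _))
          _ = q := by rw [hqdef]; simp
    _ = M := by field_simp
end field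


lemma markov_count {α : Type*} [Fintype α] [DecidableEq α] (ρ : α → ℝ) (hρ : ∀ a, 0 ≤ ρ a)
    (ε : ℝ) (hε : 0 < ε) :
    ((Finset.univ.filter (fun a => ε < ρ a)).card : ℝ) * ε ≤ ∑ a : α, ρ a := by
  calc ((Finset.univ.filter (fun a => ε < ρ a)).card : ℝ) * ε
      = ∑ _a ∈ Finset.univ.filter (fun a => ε < ρ a), ε := by rw [Finset.sum_const, nsmul_eq_mul]
    _ ≤ ∑ a ∈ Finset.univ.filter (fun a => ε < ρ a), ρ a :=
        Finset.sum_le_sum fun a ha => le_of_lt (Finset.mem_filter.mp ha).2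
    _ ≤ ∑ a : α, ρ a := Finset.sum_le_sum_of_subset_of_nonneg (Finset.filter_subset _ _)
        (fun a _ _ => hρ a)

lemma card_sparse_le {n : ℕ} {F : Type} [Fintype F] [DecidableEq F] [Zero F] (k : ℕ) (hk : k ≤ n) :
    ((Finset.univ.filter (fun a : Fin n → F =>
        (Finset.univ.filter (fun i => a i ≠ 0)).card ≤ k)).card : ℕ)
      ≤ 2 ^ n * (Fintype.card F) ^ k := by
  classical
  set A : Finset (Fin n) → Finset (Fin n → F) :=
    fun S => Finset.univ.filter (fun a => ∀ i, i ∉ S → a i = 0) with hA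
  have hsub : (Finset.univ.filter (fun a : Fin n → F =>
      (Finset.univ.filter (fun i => a i ≠ 0)).card ≤ k))
      ⊆ (Finset.univ.powersetCard k).biUnion A := by
    intro a ha
    have hcard := (Finset.mem_filter.mp ha).2
    obtain ⟨S, hS1, _hS2, hS3⟩ := Finset.exists_subsuperset_card_eq
      (Finset.subset_univ (Finset.univ.filter (fun i => a i ≠ 0))) hcard (by simpa using hk)
    refine Finset.mem_biUnion.mpr ⟨S, ?_, ?_⟩
    · rw [Finset.mem_powersetCard]; exact ⟨Finset.subset_univ S, hS3⟩
    · rw [hA]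
      refine Finset.mem_filter.mpr ⟨Finset.mem_univ _, fun i hi => ?_⟩
      by_contra hne
      exact hi (hS1 (Finset.mem_filter.mpr ⟨Finset.mem_univ _, hne⟩))
  have hcardA : ∀ S ∈ Finset.univ.powersetCard k, (A S).card ≤ (Fintype.card F) ^ k := by
    intro S hS
    have hScard : S.card = k := (Finset.mem_powersetCard.mp hS).2
    have : (A S).card ≤ Fintype.card ({x // x ∈ S} → F) := by
      apply Finset.card_le_card_of_injOn (fun a => (fun i : {x // x ∈ S} => a i.val))
        (fun a _ => Finset.mem_univ _)
      intro a ha a' ha' heq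
      funext i
      by_cases hi : i ∈ S
      · exact congrFun heq ⟨i, hi⟩
      · rw [(Finset.mem_filter.mp ha).2 i hi, (Finset.mem_filter.mp ha').2 i hi]
    rwa [Fintype.card_fun, Fintype.card_coe, hScard] at this
  calc (Finset.univ.filter (fun a : Fin n → F =>
        (Finset.univ.filter (fun i => a i ≠ 0)).card ≤ k)).card
      ≤ ((Finset.univ.powersetCard k).biUnion A).card := Finset.card_le_card hsub
    _ ≤ ∑ S ∈ Finset.univ.powersetCard k, (A S).card := Finset.card_biUnion_le
    _ ≤ ∑ _S ∈ Finset.univ.powersetCard k, (Fintype.card F) ^ k := Finset.sum_le_sum hcardA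
    _ = (Finset.univ.powersetCard k).card * (Fintype.card F) ^ k := by
        rw [Finset.sum_const, smul_eq_mul]
    _ ≤ 2 ^ n * (Fintype.card F) ^ k := by
        apply Nat.mul_le_mul_right
        rw [Finset.card_powersetCard]
        simp only [Finset.card_univ, Fintype.card_fin]
        calc n.choose k ≤ ∑ i ∈ Finset.range (n+1), n.choose i :=
              Finset.single_le_sum (fun i _ => Nat.zero_le _) (Finset.mem_range.mpr (by omega))
          _ = 2 ^ n := Nat.sum_range_choose n


lemma sum_prod_eq' {n : ℕ} {F : Type} [Fintype F] (h : Fin n → F → ℝ) :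
    ∑ a : Fin n → F, ∏ i : Fin n, h i (a i) = ∏ i : Fin n, ∑ b : F, h i b := by
  rw [Finset.prod_univ_sum, Fintype.piFinset_univ]

lemma row_sum_le {n : ℕ} {F : Type} [Field F] [Fintype F] [DecidableEq F]
    (B : ℝ) (hB : 0 ≤ B) (pr : Fin n → F → ℝ)
    (h0 : ∀ i k, 0 ≤ pr i k) (h1 : ∀ i, ∑ k : F, pr i k = 1)
    (i₀ : Fin n) (hC : ∀ k, pr i₀ k ≤ B) (a : Fin n → F) (ha : a i₀ ≠ 0) :
    ∑ v ∈ Finset.univ.filter (fun v : Fin n → F => a ⬝ᵥ v = 0), ∏ i, pr i (v i) ≤ B := by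
  classical
  set V := Finset.univ.filter (fun v : Fin n → F => a ⬝ᵥ v = 0) with hV
  set G : (Fin n → F) → ℝ := fun u => ∏ i ∈ Finset.univ.erase i₀, pr i (u i) with hG
  have hGnn : ∀ u, 0 ≤ G u := fun u => Finset.prod_nonneg fun i _ => h0 i (u i)
  have step1 : ∑ v ∈ V, ∏ i, pr i (v i) ≤ B * ∑ v ∈ V, G v := by
    rw [Finset.mul_sum]
    apply Finset.sum_le_sum
    intro v _
    rw [← Finset.mul_prod_erase Finset.univ (fun i => pr i (v i)) (Finset.mem_univ i₀)]
    exact mul_le_mul_of_nonneg_right (hC (v i₀)) (hGnn v)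
  have hinj : ∀ v ∈ V, ∀ v' ∈ V, Function.update v i₀ 0 = Function.update v' i₀ 0 → v = v' := by
    intro v hv v' hv' heq
    have hoff : ∀ i, i ≠ i₀ → v i = v' i := by
      intro i hi
      have := congrFun heq i
      rwa [Function.update_of_ne hi, Function.update_of_ne hi] at this
    have hdot : a ⬝ᵥ v = a ⬝ᵥ v' := by
      rw [(Finset.mem_filter.mp hv).2, (Finset.mem_filter.mp hv').2]
    have hsplit : ∀ w : Fin n → F, a ⬝ᵥ w = a i₀ * w i₀ + ∑ i ∈ Finset.univ.erase i₀, a i * w i := by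
      intro w
      rw [dotProduct]
      exact (Finset.add_sum_erase Finset.univ (fun i => a i * w i) (Finset.mem_univ i₀)).symm
    rw [hsplit v, hsplit v'] at hdot
    have hsum : ∑ i ∈ Finset.univ.erase i₀, a i * v i = ∑ i ∈ Finset.univ.erase i₀, a i * v' i :=
      Finset.sum_congr rfl fun i hi => by rw [hoff i (Finset.ne_of_mem_erase hi)]
    have : a i₀ * v i₀ = a i₀ * v' i₀ := by linear_combination hdot - hsum
    have hv0 : v i₀ = v' i₀ := mul_left_cancel₀ ha this
    funext i
    by_cases hi : i = i₀
    · rw [hi, hv0]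
    · exact hoff i hi
  have step2 : ∑ v ∈ V, G v ≤ 1 := by
    have himg : ∑ v ∈ V, G v = ∑ u ∈ V.image (fun v => Function.update v i₀ 0), G u := by
      rw [Finset.sum_image hinj]
      apply Finset.sum_congr rfl
      intro v _
      apply Finset.prod_congr rfl
      intro i hi
      rw [Function.update_of_ne (Finset.ne_of_mem_erase hi)]
    have hZ : V.image (fun v => Function.update v i₀ 0) ⊆
        Finset.univ.filter (fun u : Fin n → F => u i₀ = 0) := by
      intro u hu
      obtain ⟨v, _, rfl⟩ := Finset.mem_image.mp hu
      exact Finset.mem_filter.mpr ⟨Finset.mem_univ _, Function.update_self _ _ _⟩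
    have hZsum : ∑ u ∈ Finset.univ.filter (fun u : Fin n → F => u i₀ = 0), G u = 1 := by
      have master := sum_prod_eq' (fun i b => if i = i₀ then (if b = 0 then (1:ℝ) else 0) else pr i b)
      have lhs_eq : ∑ a : Fin n → F, ∏ i : Fin n,
          (if i = i₀ then (if a i = 0 then (1:ℝ) else 0) else pr i (a i))
          = ∑ u ∈ Finset.univ.filter (fun u : Fin n → F => u i₀ = 0), G u := by
        rw [Finset.sum_filter]
        apply Finset.sum_congr rfl
        intro u _
        rw [← Finset.mul_prod_erase Finset.univ _ (Finset.mem_univ i₀), if_pos rfl]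
        have : ∏ i ∈ Finset.univ.erase i₀,
            (if i = i₀ then (if u i = 0 then (1:ℝ) else 0) else pr i (u i)) = G u := by
          apply Finset.prod_congr rfl
          intro i hi
          rw [if_neg (Finset.ne_of_mem_erase hi)]
        rw [this]
        split_ifs with h
        · rw [one_mul]
        · rw [zero_mul]
      have rhs_eq : ∏ i : Fin n, ∑ b : F,
          (if i = i₀ then (if b = 0 then (1:ℝ) else 0) else pr i b) = 1 := by
        apply Finset.prod_eq_one
        intro i _
        by_cases hi : i = i₀
        · rw [hi]; simp
        · simp only [if_neg hi]; exact h1 i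
      rw [← lhs_eq, master, rhs_eq]
    calc ∑ v ∈ V, G v = ∑ u ∈ V.image (fun v => Function.update v i₀ 0), G u := himg
      _ ≤ ∑ u ∈ Finset.univ.filter (fun u : Fin n → F => u i₀ = 0), G u :=
          Finset.sum_le_sum_of_subset_of_nonneg hZ (fun u _ _ => hGnn u)
      _ = 1 := hZsum
  calc ∑ v ∈ V, ∏ i, pr i (v i) ≤ B * ∑ v ∈ V, G v := step1
    _ ≤ B * 1 := mul_le_mul_of_nonneg_left step2 hB
    _ = B := mul_one B


variable {n m : ℕ} {F : Type} [Field F] [Fintype F] [DecidableEq F]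
  [MeasurableSpace F] [MeasurableSingletonClass F]
  {Ω : Type} [MeasureSpace Ω] [IsProbabilityMeasure (ℙ : Measure Ω)]

lemma prob_orth_le (X : Fin (m + 1) → Ω → (Fin n → F))
    (hind : iIndepFun
      (fun q : Fin n × Fin (m + 1) => fun ω => X q.2 ω q.1) ℙ)
    (a : Fin n → F) (G : Finset (Fin m)) (B : ℝ) (hB : 0 ≤ B)
    (hrow : ∀ j ∈ G, ∑ v ∈ Finset.univ.filter (fun v : Fin n → F => a ⬝ᵥ v = 0),
      ∏ i, (ℙ {ω | X (Fin.castSucc j) ω i = v i}).toReal ≤ B) :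
    (ℙ {ω | ∀ j : Fin m, a ⬝ᵥ X (Fin.castSucc j) ω = 0}).toReal ≤ B ^ G.card := by
  classical
  set V : Finset (Fin n → F) := Finset.univ.filter (fun v : Fin n → F => a ⬝ᵥ v = 0) with hV
  set t : Fin m → Finset (Fin n → F) := fun j => if j ∈ G then V else {0} with ht
  set W : Finset (Fin m → Fin n → F) := Fintype.piFinset t with hW
  set J : Finset (Fin (m+1)) := G.image Fin.castSucc with hJ
  set S : Finset (Fin n × Fin (m+1)) := Finset.univ ×ˢ J with hS
  set vv : (Fin m → Fin n → F) → Fin n × Fin (m+1) → F :=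
    fun v q => if h : (q.2 : ℕ) < m then v ⟨q.2, h⟩ q.1 else 0 with hvv
  set atom : (Fin m → Fin n → F) → Set Ω :=
    fun v => ⋂ q ∈ S, (fun ω => X q.2 ω q.1) ⁻¹' {vv v q} with hatom
  -- inclusion
  have hincl : {ω | ∀ j : Fin m, a ⬝ᵥ X (Fin.castSucc j) ω = 0} ⊆ ⋃ v ∈ W, atom v := by
    intro ω hω
    set v : Fin m → Fin n → F := fun j => if j ∈ G then (fun i => X (Fin.castSucc j) ω i) else 0 with hv
    have hvW : v ∈ W := by
      rw [hW, Fintype.mem_piFinset]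
      intro j
      by_cases hj : j ∈ G
      · rw [ht]; simp only [if_pos hj, hv]
        exact Finset.mem_filter.mpr ⟨Finset.mem_univ _, hω j⟩
      · rw [ht]; simp only [if_neg hj, hv]
        exact Finset.mem_singleton_self 0
    refine Set.mem_biUnion hvW ?_
    rw [hatom]
    refine Set.mem_iInter₂.mpr ?_
    rintro ⟨i, j'⟩ hq
    rw [hS, Finset.mem_product] at hq
    obtain ⟨j, hjG, hj'⟩ := Finset.mem_image.mp hq.2
    subst hj'
    have hlt : ((Fin.castSucc j : Fin (m+1)) : ℕ) < m := by simpa using j.isLt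
    simp only [Set.mem_preimage, Set.mem_singleton_iff, hvv]
    rw [dif_pos hlt]
    have hjj : (⟨((Fin.castSucc j : Fin (m+1)) : ℕ), hlt⟩ : Fin m) = j := by
      apply Fin.ext; simp
    simp only [hjj, hv, if_pos hjG]
  -- measure bound
  have hatom_meas : ∀ v, (ℙ (atom v)) = ∏ q ∈ S, ℙ ((fun ω => X q.2 ω q.1) ⁻¹' {vv v q}) := by
    intro v
    exact hind.measure_inter_preimage_eq_mul S (fun q _ => measurableSet_singleton _)
  have hmono : ℙ {ω | ∀ j : Fin m, a ⬝ᵥ X (Fin.castSucc j) ω = 0} ≤ ∑ v ∈ W, ℙ (atom v) :=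
    le_trans (measure_mono hincl) (measure_biUnion_finset_le W atom)
  have htoReal : (ℙ {ω | ∀ j : Fin m, a ⬝ᵥ X (Fin.castSucc j) ω = 0}).toReal
      ≤ ∑ v ∈ W, ∏ q ∈ S, (ℙ ((fun ω => X q.2 ω q.1) ⁻¹' {vv v q})).toReal := by
    have h1 : (ℙ {ω | ∀ j : Fin m, a ⬝ᵥ X (Fin.castSucc j) ω = 0}).toReal
        ≤ (∑ v ∈ W, ℙ (atom v)).toReal := by
      apply ENNReal.toReal_mono _ hmono
      apply ENNReal.sum_ne_top.mpr
      intro v _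
      exact measure_ne_top _ _
    rw [ENNReal.toReal_sum (fun v _ => measure_ne_top _ _)] at h1
    refine le_trans h1 (le_of_eq (Finset.sum_congr rfl fun v _ => ?_))
    rw [hatom_meas v, ENNReal.toReal_prod]
  -- rewrite the product per row
  have hprod : ∀ v : Fin m → Fin n → F,
      ∏ q ∈ S, (ℙ ((fun ω => X q.2 ω q.1) ⁻¹' {vv v q})).toReal
      = ∏ j ∈ G, ∏ i : Fin n, (ℙ {ω | X (Fin.castSucc j) ω i = v j i}).toReal := by
    intro v
    rw [hS, Finset.prod_product]
    rw [Finset.prod_comm]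
    rw [hJ, Finset.prod_image (fun x _ y _ h => Fin.castSucc_injective m h)]
    apply Finset.prod_congr rfl
    intro j _
    apply Finset.prod_congr rfl
    intro i _
    congr 1
    have hlt : ((Fin.castSucc j : Fin (m+1)) : ℕ) < m := by simpa using j.isLt
    have hjj : (⟨((Fin.castSucc j : Fin (m+1)) : ℕ), hlt⟩ : Fin m) = j := by apply Fin.ext; simp
    simp only [hvv, dif_pos hlt, hjj]
    rfl
  -- sum over W
  have hfinal : ∑ v ∈ W, ∏ j ∈ G, ∏ i : Fin n, (ℙ {ω | X (Fin.castSucc j) ω i = v j i}).toReal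
      ≤ B ^ G.card := by
    set w : Fin m → (Fin n → F) → ℝ :=
      fun j u => ∏ i : Fin n, (ℙ {ω | X (Fin.castSucc j) ω i = u i}).toReal with hw
    set h : Fin m → (Fin n → F) → ℝ := fun j u => if j ∈ G then w j u else 1 with hh
    have hrw : ∀ v ∈ W, ∏ j ∈ G, w j (v j) = ∏ j : Fin m, h j (v j) := by
      intro v _
      rw [hh]
      rw [Finset.prod_ite_mem Finset.univ G (fun j => w j (v j))]
      rw [Finset.univ_inter]
    rw [Finset.sum_congr rfl hrw]
    rw [hW, ← Finset.prod_univ_sum]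
    have hfac : ∀ j : Fin m, ∑ u ∈ t j, h j u ≤ if j ∈ G then B else 1 := by
      intro j
      by_cases hj : j ∈ G
      · simp only [ht, if_pos hj]
        calc ∑ u ∈ V, h j u = ∑ u ∈ V, w j u :=
              Finset.sum_congr rfl (fun u _ => by simp only [hh, if_pos hj])
          _ ≤ B := hrow j hj
      · simp only [ht, if_neg hj]
        rw [Finset.sum_singleton]
        simp only [hh, if_neg hj]
        exact le_refl 1
    have hfac0 : ∀ j : Fin m, 0 ≤ ∑ u ∈ t j, h j u := by
      intro j
      apply Finset.sum_nonneg
      intro u _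
      simp only [hh]
      split_ifs with hj
      · exact Finset.prod_nonneg fun i _ => ENNReal.toReal_nonneg
      · exact zero_le_one
    calc ∏ j : Fin m, ∑ u ∈ t j, h j u ≤ ∏ j : Fin m, (if j ∈ G then B else 1) :=
          Finset.prod_le_prod (fun j _ => hfac0 j) (fun j _ => hfac j)
      _ = B ^ G.card := by
          rw [Finset.prod_ite_mem Finset.univ G (fun _ => B), Finset.univ_inter, Finset.prod_const]
  calc (ℙ {ω | ∀ j : Fin m, a ⬝ᵥ X (Fin.castSucc j) ω = 0}).toReal
      ≤ ∑ v ∈ W, ∏ q ∈ S, (ℙ ((fun ω => X q.2 ω q.1) ⁻¹' {vv v q})).toReal := htoReal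
    _ = ∑ v ∈ W, ∏ j ∈ G, ∏ i : Fin n, (ℙ {ω | X (Fin.castSucc j) ω i = v j i}).toReal :=
        Finset.sum_congr rfl (fun v _ => hprod v)
    _ ≤ B ^ G.card := hfinal


lemma sum_probs {Ω : Type} [MeasureSpace Ω] [IsProbabilityMeasure (ℙ : Measure Ω)]
    {F : Type} [Fintype F] [DecidableEq F] [MeasurableSpace F] [MeasurableSingletonClass F]
    (Y : Ω → F) (hY : Measurable Y) :
    ∑ k : F, (ℙ {ω | Y ω = k}).toReal = 1 := by
  have hmeas : ∀ k : F, MeasurableSet {ω | Y ω = k} := fun k => hY (measurableSet_singleton k)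
  have hdisj : (↑(Finset.univ : Finset F) : Set F).PairwiseDisjoint (fun k => {ω | Y ω = k}) := by
    intro k _ k' _ hkk'
    apply Set.disjoint_left.mpr
    intro ω h1 h2
    exact hkk' (h1.symm.trans h2)
  have hsum : ∑ k : F, ℙ {ω | Y ω = k} = ℙ (⋃ k ∈ (Finset.univ : Finset F), {ω | Y ω = k}) :=
    (measure_biUnion_finset hdisj (fun k _ => hmeas k)).symm
  have huniv : (⋃ k ∈ (Finset.univ : Finset F), {ω | Y ω = k}) = Set.univ := by
    ext ω
    simp only [Set.mem_iUnion, Set.mem_univ, iff_true]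
    exact ⟨Y ω, Finset.mem_univ _, rfl⟩
  have : ∑ k : F, ℙ {ω | Y ω = k} = 1 := by rw [hsum, huniv, measure_univ]
  calc ∑ k : F, (ℙ {ω | Y ω = k}).toReal
      = (∑ k : F, ℙ {ω | Y ω = k}).toReal := (ENNReal.toReal_sum (fun k _ => measure_ne_top _ _)).symm
    _ = 1 := by rw [this]; simp

lemma meas_dot {n : ℕ} {F : Type} [Field F] [Fintype F] [DecidableEq F]
    [MeasurableSpace F] [MeasurableSingletonClass F]
    {Ω : Type} [MeasureSpace Ω]
    (X : Ω → Fin n → F) (hX : ∀ i, Measurable fun ω => X ω i) (a : Fin n → F) :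
    MeasurableSet {ω | a ⬝ᵥ X ω = 0} := by
  have heq : {ω | a ⬝ᵥ X ω = 0}
      = ⋃ v ∈ Finset.univ.filter (fun v : Fin n → F => a ⬝ᵥ v = 0),
          ⋂ i, (fun ω => X ω i) ⁻¹' {v i} := by
    ext ω
    simp only [Set.mem_setOf_eq, Set.mem_iUnion, Set.mem_iInter, Finset.mem_filter,
      Finset.mem_univ, true_and, Set.mem_preimage, Set.mem_singleton_iff]
    constructor
    · intro h
      exact ⟨fun i => X ω i, h, fun i => rfl⟩
    · rintro ⟨v, hv, hvi⟩
      have : (fun i => X ω i) = v := funext hvi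
      have h2 : a ⬝ᵥ (fun i => X ω i) = 0 := by rw [this]; exact hv
      simpa [dotProduct] using h2
  rw [heq]
  apply Set.Finite.measurableSet_biUnion (Finset.finite_toSet _)
  intro v _
  exact MeasurableSet.iInter (fun i => hX i (measurableSet_singleton (v i)))

lemma arith_main (C α q : ℝ) (n : ℕ) (hC : 1 ≤ C) (hα : 0 < α) (hα18 : α ≤ 1/18)
    (hn : 1 ≤ n) (hq1 : 1 ≤ q) :
    2^n * q^(α*(n:ℝ)) * (C/q)^(6*α*(n:ℝ))
      + (Real.sqrt (C*q)^n * q^(α*(n:ℝ)) / ((((2+C)^(9:ℕ):ℝ))^(1/α)/q)^(α*(n:ℝ)))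
        * (C/q)^((1-6*α)*(n:ℝ))
      ≤ ((((2+C)^(9:ℕ):ℝ))^(1/α)/q)^(α*(n:ℝ)) := by
  have hq0 : (0:ℝ) < q := lt_of_lt_of_le one_pos hq1
  have hC0 : (0:ℝ) < C := lt_of_lt_of_le one_pos hC
  set K : ℝ := ((2+C)^(9:ℕ) : ℝ) with hK
  have h2C : (1:ℝ) ≤ 2 + C := by linarith
  have hK1 : (1:ℝ) ≤ K := one_le_pow₀ h2C
  have hK0 : (0:ℝ) < K := lt_of_lt_of_le one_pos hK1
  set en : ℝ := (n:ℝ) with hen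
  have hen1 : (1:ℝ) ≤ en := by rw [hen]; exact_mod_cast hn
  have hen0 : (0:ℝ) ≤ en := by linarith
  have hαen : 0 ≤ α * en := by positivity
  set ε : ℝ := (K^(1/α)/q)^(α*en) with hε
  have hε0 : 0 < ε := by
    apply Real.rpow_pos_of_pos
    positivity
  -- epsilon in split form
  have hεeq : ε = K^en / q^(α*en) := by
    rw [hε, Real.div_rpow (by positivity) (le_of_lt hq0)]
    congr 1
    rw [← Real.rpow_mul (le_of_lt hK0)]
    congr 1
    field_simp
  -- part A : sparse term
  have hA : 2^n * q^(α*en) * (C/q)^(6*α*en) ≤ ε/2 := by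
    have hsplit : (C/q)^(6*α*en) = C^(6*α*en) / q^(6*α*en) :=
      Real.div_rpow (le_of_lt hC0) (le_of_lt hq0) _
    have hqexp : q^(α*en) / q^(6*α*en) ≤ 1 / q^(α*en) := by
      rw [div_le_div_iff₀ (by positivity) (by positivity), one_mul, ← Real.rpow_add hq0]
      apply Real.rpow_le_rpow_of_exponent_le hq1
      nlinarith [mul_nonneg hα.le hen0, mul_le_mul_of_nonneg_right hα18 hen0, hen1]
    have hcoef : 2^n * C^(6*α*en) ≤ K^en / 2 := by
      have h1 : C^(6*α*en) ≤ C^en := by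
        apply Real.rpow_le_rpow_of_exponent_le hC
        nlinarith
      have h2 : C^en = C^n := by rw [hen, Real.rpow_natCast]
      have h3 : K^en = K^n := by rw [hen, Real.rpow_natCast]
      rw [h3]
      have key : (2:ℝ) * (2^n * C^n) ≤ K^n := by
        calc (2:ℝ) * (2^n * C^n) ≤ 2^n * (2^n * C^n) := by
              have h2n : (2:ℝ) ≤ 2^n := by
                calc (2:ℝ) = 2^1 := (pow_one 2).symm
                  _ ≤ 2^n := pow_le_pow_right₀ one_le_two hn
              exact mul_le_mul_of_nonneg_right h2n (by positivity)
          _ = (2*(2*C))^n := by rw [mul_pow, mul_pow]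
          _ ≤ ((2+C)^(9:ℕ))^n := by
              apply pow_le_pow_left₀ (by positivity)
              calc 2*(2*C) = 4*C := by ring
                _ ≤ (2+C)^2 := by nlinarith
                _ ≤ (2+C)^(9:ℕ) := pow_le_pow_right₀ h2C (by norm_num)
          _ = K^n := by rw [hK]
      calc 2^n * C^(6*α*en) ≤ 2^n * C^en := by
            apply mul_le_mul_of_nonneg_left h1 (by positivity)
        _ = 2^n * C^n := by rw [h2]
        _ ≤ K^n / 2 := by linarith
    calc 2^n * q^(α*en) * (C/q)^(6*α*en)
        = (2^n * C^(6*α*en)) * (q^(α*en) / q^(6*α*en)) := by rw [hsplit]; ring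
      _ ≤ (K^en / 2) * (1 / q^(α*en)) := by
          apply mul_le_mul hcoef hqexp (by positivity) (by positivity)
      _ = ε/2 := by rw [hεeq]; ring
  -- part B : spread term
  have hB : (Real.sqrt (C*q)^n * q^(α*en) / ε) * (C/q)^((1-6*α)*en) ≤ ε/2 := by
    have hsqrt : Real.sqrt (C*q)^n = C^(en/2) * q^(en/2) := by
      rw [Real.sqrt_eq_rpow, ← Real.rpow_natCast ((C*q)^((1:ℝ)/2)) n,
        ← Real.rpow_mul (by positivity), Real.mul_rpow (le_of_lt hC0) (le_of_lt hq0)]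
      rw [← hen, show (1:ℝ)/2 * en = en/2 by ring]
    have hCd : (C/q)^((1-6*α)*en) = C^((1-6*α)*en) / q^((1-6*α)*en) :=
      Real.div_rpow (le_of_lt hC0) (le_of_lt hq0) _
    have hcn : C^en = C^n := by rw [hen, Real.rpow_natCast]
    have hkn : K^en = K^n := by rw [hen, Real.rpow_natCast]
    rw [div_mul_eq_mul_div, div_le_div_iff₀ hε0 (by norm_num)]
    have hX : Real.sqrt (C*q)^n * q^(α*en) * (C/q)^((1-6*α)*en) * 2
        = (2 * C^(en/2 + (1-6*α)*en)) * (q^(en/2 + α*en) / q^((1-6*α)*en)) := by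
      rw [hsqrt, hCd, Real.rpow_add hC0, Real.rpow_add hq0]
      ring
    have hE : ε * ε = K^(en+en) / q^(α*en + α*en) := by
      rw [hεeq, div_mul_div_comm, ← Real.rpow_add hK0, ← Real.rpow_add hq0]
    rw [hX, hE]
    have hqcomp : q^(en/2 + α*en) / q^((1-6*α)*en) ≤ 1 / q^(α*en + α*en) := by
      rw [div_le_div_iff₀ (by positivity) (by positivity), one_mul, ← Real.rpow_add hq0]
      apply Real.rpow_le_rpow_of_exponent_le hq1
      nlinarith [mul_nonneg hα.le hen0, mul_le_mul_of_nonneg_right hα18 hen0, hen1]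
    have hKcomp : 2 * C^(en/2 + (1-6*α)*en) ≤ K^(en+en) := by
      have h1 : C^(en/2 + (1-6*α)*en) ≤ C^(en+en) := by
        apply Real.rpow_le_rpow_of_exponent_le hC
        nlinarith
      have h2 : C^(en+en) = C^n * C^n := by rw [Real.rpow_add hC0, hcn]
      have h3 : K^(en+en) = K^n * K^n := by rw [Real.rpow_add hK0, hkn]
      have hcube : (2:ℝ)*(C*C) ≤ (2+C)^(9:ℕ) := by
        have hc3 : ((2+C):ℝ)^(3:ℕ) ≤ (2+C)^(9:ℕ) := pow_le_pow_right₀ h2C (by norm_num)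
        have hex : ((2+C):ℝ)^(3:ℕ) = 8+12*C+6*C^2+C^3 := by ring
        nlinarith
      have hKn1 : (1:ℝ) ≤ K^n := one_le_pow₀ hK1
      calc 2 * C^(en/2 + (1-6*α)*en) ≤ 2 * (C^n * C^n) := by
            rw [← h2]
            exact mul_le_mul_of_nonneg_left h1 (by norm_num)
        _ = 2 * (C*C)^n := by rw [mul_pow]
        _ ≤ (2*(C*C))^n := by
            rw [mul_pow 2 (C*C) n]
            have h2n : (2:ℝ) ≤ 2^n := by
              calc (2:ℝ) = 2^1 := (pow_one 2).symm
                _ ≤ 2^n := pow_le_pow_right₀ one_le_two hn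
            exact mul_le_mul_of_nonneg_right h2n (by positivity)
        _ ≤ K^n := by
            rw [hK]
            exact pow_le_pow_left₀ (by positivity) hcube n
        _ ≤ K^n * K^n := le_mul_of_one_le_left (by positivity) hKn1
        _ = K^(en+en) := h3.symm
    calc (2 * C^(en/2 + (1-6*α)*en)) * (q^(en/2 + α*en) / q^((1-6*α)*en))
        ≤ K^(en+en) * (1 / q^(α*en + α*en)) := by
          apply mul_le_mul hKcomp hqcomp (by positivity) (by positivity)
      _ = K^(en+en) / q^(α*en + α*en) := by rw [mul_one_div]
  linarith
/-- **No structured normal vectors.** With probability at least `1 − (C'/q)^{cn}`, every nonzero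
vector `a` orthogonal to the near uniform columns `X_1, …, X_m` (with `m ≥ (1−6α)n`) satisfies
`ρ_{F_{m+1}}(a) ≤ (C'/q)^{cn}`, where `ρ` is defined through the characters
`f_i(t) = |E e_p(tr(x_i t))|` of the entries of `X_{m+1}`. -/
theorem near_uniform_no_structured_normal_vector
    (C : ℝ) (hC : 1 ≤ C) :
    ∃ α₀ > (0 : ℝ), ∀ α : ℝ, 0 < α → α ≤ α₀ →
    ∃ C' > (0 : ℝ), ∃ c > (0 : ℝ),
      ∀ (p n m : ℕ), p.Prime → (1 - 6 * α) * n ≤ (m : ℝ) → ∀ (hmn : m < n),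
      ∀ (F : Type) [Field F] [Fintype F] [DecidableEq F] [CharP F p] [Algebra (ZMod p) F]
        [MeasurableSpace F] [MeasurableSingletonClass F]
        (Ω : Type) [MeasureSpace Ω], IsProbabilityMeasure (ℙ : Measure Ω) →
      ∀ Fset : Fin n → Finset (Fin n),
        -- |F_i| < αn
        (∀ i, ((Fset i).card : ℝ) < α * n) →
        -- every index i lies in at most (1 − 12α)n of the sets F_j
        (∀ i : Fin n,
          (((Finset.univ.filter fun j => i ∈ Fset j).card : ℝ) ≤ (1 - 12 * α) * n)) →
      -- `X 0, …, X m` are the columns `X_1, …, X_{m+1}`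
      ∀ X : Fin (m + 1) → Ω → (Fin n → F),
        (∀ (j : Fin (m + 1)) (i : Fin n), Measurable fun ω => X j ω i) →
        -- all entries of all the vectors are (jointly) independent
        iIndepFun
          (fun q : Fin n × Fin (m + 1) => fun ω => X q.2 ω q.1) ℙ →
        -- X_j is a near uniform vector of type F_j
        (∀ (j : Fin (m + 1)) (i : Fin n), i ∉ Fset (Fin.castLE hmn j) → ∀ a : F,
          (ℙ {ω | X j ω i = a}).toReal ≤ C / (Fintype.card F : ℝ)) →
        1 - (C' / (Fintype.card F : ℝ)) ^ (c * n) ≤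
          (ℙ {ω | ∀ a : Fin n → F, a ≠ 0 →
            (∀ j : Fin m, a ⬝ᵥ X (Fin.castSucc j) ω = 0) →
            (Fintype.card F : ℝ)⁻¹ *
              ∑ t ∈ Finset.univ.erase (0 : F),
                ∏ i ∈ Finset.univ \ Fset ⟨m, hmn⟩,
                  ‖∑ k : F, ((ℙ {ω' | X (Fin.last m) ω' i = k}).toReal : ℂ) *
                    ep p (Algebra.trace (ZMod p) F (k * (t * a i)))‖ ≤
              (C' / (Fintype.card F : ℝ)) ^ (c * n)}).toReal := by
  refine ⟨1/18, by norm_num, ?_⟩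
  intro α hα hα18
  have h2C : (1:ℝ) ≤ 2 + C := by linarith
  refine ⟨((2+C)^(9:ℕ) : ℝ) ^ ((1:ℝ)/α), by positivity, α, hα, ?_⟩
  intro p n m hp hmlb hmn F iF1 iF2 iF3 iF4 iF5 iF6 iF7 Ω iΩ hprob Fset hFcard hFmem
    X hXmeas hXind hXnear
  haveI : Fact p.Prime := ⟨hp⟩
  haveI := hprob
  classical
  set K : ℝ := ((2+C)^(9:ℕ) : ℝ) with hK
  set q : ℝ := (Fintype.card F : ℝ) with hq
  have hn0 : 0 < n := lt_of_le_of_lt (Nat.zero_le m) hmn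
  have hn1 : 1 ≤ n := hn0
  have hq1 : (1:ℝ) ≤ q := by rw [hq]; exact_mod_cast Nat.one_le_cast.mpr Fintype.card_pos
  have hq0 : (0:ℝ) < q := lt_of_lt_of_le one_pos hq1
  have hK1 : (1:ℝ) ≤ K := one_le_pow₀ h2C
  have hK0 : (0:ℝ) < K := lt_of_lt_of_le one_pos hK1
  have hC0 : (0:ℝ) < C := lt_of_lt_of_le one_pos hC
  set ε : ℝ := (K ^ ((1:ℝ)/α) / q) ^ (α * (n:ℝ)) with hε
  have hε0 : 0 < ε := Real.rpow_pos_of_pos (by positivity) _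
  by_cases hcase : q ≤ K ^ ((1:ℝ)/α)
  · -- trivial case : ε ≥ 1
    have h1ε : (1:ℝ) ≤ ε := by
      rw [hε]
      apply Real.one_le_rpow ((one_le_div hq0).mpr hcase) (by positivity)
    have hle : 1 - ε ≤ 0 := by linarith
    exact le_trans hle ENNReal.toReal_nonneg
  push_neg at hcase
  -- C ≤ q
  have hKle : K ≤ K ^ ((1:ℝ)/α) := by
    calc K = K ^ ((1:ℝ)) := (Real.rpow_one K).symm
      _ ≤ K ^ ((1:ℝ)/α) := by
          apply Real.rpow_le_rpow_of_exponent_le hK1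
          rw [le_div_iff₀ hα]
          linarith
  have hCK : C ≤ K := by
    calc C ≤ 2 + C := by linarith
      _ = (2+C)^(1:ℕ) := (pow_one _).symm
      _ ≤ (2+C)^(9:ℕ) := pow_le_pow_right₀ h2C (by norm_num)
  have hCq : C ≤ q := by linarith
  have hCq1 : C/q ≤ 1 := (div_le_one hq0).mpr hCq
  have hCq0 : 0 < C/q := by positivity
  -- notation
  set Fs : Finset (Fin n) := Fset ⟨m, hmn⟩ with hFs
  set w : Fin n → F → ℝ := fun i k => (ℙ {ω' | X (Fin.last m) ω' i = k}).toReal with hw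
  set ρ : (Fin n → F) → ℝ := fun a => q⁻¹ *
    ∑ t ∈ Finset.univ.erase (0 : F), ∏ i ∈ Finset.univ \ Fs,
      ‖∑ k : F, (w i k : ℂ) * ep p (Algebra.trace (ZMod p) F (k * (t * a i)))‖ with hρ
  have hρnn : ∀ a, 0 ≤ ρ a := by
    intro a
    rw [hρ]
    apply mul_nonneg (by positivity)
    apply Finset.sum_nonneg
    intro t _
    exact Finset.prod_nonneg (fun i _ => norm_nonneg _)
  set O : (Fin n → F) → Set Ω :=
    fun a => {ω | ∀ j : Fin m, a ⬝ᵥ X (Fin.castSucc j) ω = 0} with hO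
  set Bad : Finset (Fin n → F) :=
    Finset.univ.filter (fun a => a ≠ 0 ∧ ε < ρ a) with hBad
  set U : Set Ω := ⋃ a ∈ Bad, O a with hU
  have hOmeas : ∀ a, MeasurableSet (O a) := by
    intro a
    have heq : O a = ⋂ j : Fin m, {ω | a ⬝ᵥ X (Fin.castSucc j) ω = 0} := by
      ext ω
      simp only [hO, Set.mem_iInter, Set.mem_setOf_eq]
    rw [heq]
    exact MeasurableSet.iInter (fun j => meas_dot (X (Fin.castSucc j)) (fun i => hXmeas _ i) a)
  have hUmeas : MeasurableSet U := Finset.measurableSet_biUnion Bad (fun a _ => hOmeas a)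
  -- probabilities of entries
  have hw0 : ∀ i k, 0 ≤ w i k := fun i k => ENNReal.toReal_nonneg
  have hw1 : ∀ i, ∑ k : F, w i k = 1 := by
    intro i
    exact sum_probs (fun ω => X (Fin.last m) ω i) (hXmeas _ i)
  have hwC : ∀ i, i ∉ Fs → ∀ k, w i k ≤ C / q := by
    intro i hi k
    have hcast : Fin.castLE hmn (Fin.last m) = (⟨m, hmn⟩ : Fin n) := rfl
    apply hXnear (Fin.last m) i (by rw [hcast]; exact hi) k
  -- per-a bound, sparse version
  have hO_sp : ∀ a : Fin n → F, a ≠ 0 → (ℙ (O a)).toReal ≤ (C/q)^(6*α*(n:ℝ)) := by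
    intro a ha
    obtain ⟨i₀, hi₀⟩ : ∃ i, a i ≠ 0 := by
      by_contra h
      push_neg at h
      exact ha (funext h)
    set G : Finset (Fin m) :=
      Finset.univ.filter (fun j : Fin m => i₀ ∉ Fset (Fin.castLE hmn (Fin.castSucc j))) with hG
    have hPG : (ℙ (O a)).toReal ≤ (C/q)^G.card := by
      apply prob_orth_le X hXind a G (C/q) hCq0.le
      intro j hj
      have hi₀F : i₀ ∉ Fset (Fin.castLE hmn (Fin.castSucc j)) := (Finset.mem_filter.mp hj).2
      apply row_sum_le (C/q) hCq0.le
        (fun i k => (ℙ {ω | X (Fin.castSucc j) ω i = k}).toReal)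
        (fun i k => ENNReal.toReal_nonneg)
        (fun i => sum_probs (fun ω => X (Fin.castSucc j) ω i) (hXmeas _ i))
        i₀ (fun k => hXnear (Fin.castSucc j) i₀ hi₀F k) a hi₀
    have hGcard : 6*α*(n:ℝ) ≤ (G.card : ℝ) := by
      have hinj : (Finset.univ.filter
          (fun j : Fin m => i₀ ∈ Fset (Fin.castLE hmn (Fin.castSucc j)))).card
          ≤ (Finset.univ.filter (fun j : Fin n => i₀ ∈ Fset j)).card := by
        apply Finset.card_le_card_of_injOn (fun j => Fin.castLE hmn (Fin.castSucc j))
        · intro j hj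
          exact Finset.mem_filter.mpr ⟨Finset.mem_univ _, (Finset.mem_filter.mp hj).2⟩
        · intro j _ j' _ hjj
          have : ((j : ℕ) : ℕ) = (j' : ℕ) := by
            have := congrArg Fin.val hjj
            simpa using this
          exact Fin.ext this
      have hsplitG : G.card + (Finset.univ.filter
          (fun j : Fin m => i₀ ∈ Fset (Fin.castLE hmn (Fin.castSucc j)))).card = m := by
        have h := Finset.card_filter_add_card_filter_not
          (s := (Finset.univ : Finset (Fin m)))
          (p := fun j : Fin m => i₀ ∈ Fset (Fin.castLE hmn (Fin.castSucc j)))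
        rw [Finset.card_univ, Fintype.card_fin] at h
        rw [hG]
        omega
      have h1 : ((Finset.univ.filter
          (fun j : Fin m => i₀ ∈ Fset (Fin.castLE hmn (Fin.castSucc j)))).card : ℝ)
          ≤ (1 - 12*α) * n := le_trans (by exact_mod_cast hinj) (hFmem i₀)
      have h2 : (G.card : ℝ) + ((Finset.univ.filter
          (fun j : Fin m => i₀ ∈ Fset (Fin.castLE hmn (Fin.castSucc j)))).card : ℝ)
          = (m : ℝ) := by exact_mod_cast congrArg (Nat.cast : ℕ → ℝ) hsplitG
      linarith
    calc (ℙ (O a)).toReal ≤ (C/q)^G.card := hPG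
      _ = (C/q)^((G.card : ℕ) : ℝ) := (Real.rpow_natCast _ _).symm
      _ ≤ (C/q)^(6*α*(n:ℝ)) := Real.rpow_le_rpow_of_exponent_ge hCq0 hCq1 hGcard
  -- per-a bound, spread version
  have hO_spr : ∀ a : Fin n → F,
      α*(n:ℝ) < ((Finset.univ.filter (fun i => a i ≠ 0)).card : ℝ) →
      (ℙ (O a)).toReal ≤ (C/q)^((1-6*α)*(n:ℝ)) := by
    intro a hspread
    have hPG : (ℙ (O a)).toReal ≤ (C/q)^(Finset.univ : Finset (Fin m)).card := by
      apply prob_orth_le X hXind a Finset.univ (C/q) hCq0.le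
      intro j _
      have hnotsub : ¬ (Finset.univ.filter (fun i => a i ≠ 0)
          ⊆ Fset (Fin.castLE hmn (Fin.castSucc j))) := by
        intro hsubs
        have := Finset.card_le_card hsubs
        have hcast : ((Finset.univ.filter (fun i => a i ≠ 0)).card : ℝ)
            ≤ ((Fset (Fin.castLE hmn (Fin.castSucc j))).card : ℝ) := by exact_mod_cast this
        have := hFcard (Fin.castLE hmn (Fin.castSucc j))
        linarith
      obtain ⟨i₀, hi₀s, hi₀F⟩ := Finset.not_subset.mp hnotsub
      have hi₀ : a i₀ ≠ 0 := (Finset.mem_filter.mp hi₀s).2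
      apply row_sum_le (C/q) hCq0.le
        (fun i k => (ℙ {ω | X (Fin.castSucc j) ω i = k}).toReal)
        (fun i k => ENNReal.toReal_nonneg)
        (fun i => sum_probs (fun ω => X (Fin.castSucc j) ω i) (hXmeas _ i))
        i₀ (fun k => hXnear (Fin.castSucc j) i₀ hi₀F k) a hi₀
    have hm6 : (1-6*α)*(n:ℝ) ≤ ((Finset.univ : Finset (Fin m)).card : ℝ) := by
      rw [Finset.card_univ, Fintype.card_fin]
      exact hmlb
    calc (ℙ (O a)).toReal ≤ (C/q)^(Finset.univ : Finset (Fin m)).card := hPG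
      _ = (C/q)^(((Finset.univ : Finset (Fin m)).card : ℕ) : ℝ) := (Real.rpow_natCast _ _).symm
      _ ≤ (C/q)^((1-6*α)*(n:ℝ)) := Real.rpow_le_rpow_of_exponent_ge hCq0 hCq1 hm6
  -- counting
  have hSrho : ∑ a : Fin n → F, ρ a ≤ Real.sqrt (C*q)^n * q^(α*(n:ℝ)) := by
    have h1 : ∑ a : Fin n → F, ρ a ≤ Real.sqrt (C * q)^n * q^(Fs.card : ℕ) := by
      have := sum_rho_le (p := p) C hC Fs w hw0 hw1 hwC
      rw [← hq] at this
      exact this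
    have h2 : (q:ℝ)^(Fs.card : ℕ) ≤ q^(α*(n:ℝ)) := by
      rw [← Real.rpow_natCast q Fs.card]
      apply Real.rpow_le_rpow_of_exponent_le hq1
      exact le_of_lt (hFcard ⟨m, hmn⟩)
    calc ∑ a : Fin n → F, ρ a ≤ Real.sqrt (C * q)^n * q^(Fs.card : ℕ) := h1
      _ ≤ Real.sqrt (C*q)^n * q^(α*(n:ℝ)) := by
          apply mul_le_mul_of_nonneg_left h2 (by positivity)
  -- split Bad
  set Bsp : Finset (Fin n → F) := Bad.filter
    (fun a => ((Finset.univ.filter (fun i => a i ≠ 0)).card : ℝ) ≤ α*(n:ℝ)) with hBsp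
  set Bspr : Finset (Fin n → F) := Bad.filter
    (fun a => ¬ (((Finset.univ.filter (fun i => a i ≠ 0)).card : ℝ) ≤ α*(n:ℝ))) with hBspr
  -- card of Bsp
  have hBspcard : (Bsp.card : ℝ) ≤ 2^n * q^(α*(n:ℝ)) := by
    set kk : ℕ := ⌊α*(n:ℝ)⌋₊ with hkk
    have hkkn : kk ≤ n := by
      have h1 : α*(n:ℝ) ≤ (n:ℝ) := by
        have : α ≤ 1 := by linarith
        nlinarith [Nat.cast_nonneg (α := ℝ) n]
      calc kk ≤ ⌊(n:ℝ)⌋₊ := Nat.floor_le_floor h1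
        _ = n := Nat.floor_natCast n
    have hsubs : Bsp ⊆ Finset.univ.filter (fun a : Fin n → F =>
        (Finset.univ.filter (fun i => a i ≠ 0)).card ≤ kk) := by
      intro a ha
      refine Finset.mem_filter.mpr ⟨Finset.mem_univ _, ?_⟩
      exact Nat.le_floor (Finset.mem_filter.mp ha).2
    have hcount := card_sparse_le (n := n) (F := F) kk hkkn
    have h1 : (Bsp.card : ℝ) ≤ ((2^n * (Fintype.card F)^kk : ℕ) : ℝ) := by
      exact_mod_cast le_trans (Finset.card_le_card hsubs) hcount
    have h2 : ((2^n * (Fintype.card F)^kk : ℕ) : ℝ) = 2^n * q^(kk : ℕ) := by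
      push_cast [hq]
      ring
    have h3 : (q:ℝ)^(kk:ℕ) ≤ q^(α*(n:ℝ)) := by
      rw [← Real.rpow_natCast q kk]
      apply Real.rpow_le_rpow_of_exponent_le hq1
      exact Nat.floor_le (by positivity)
    calc (Bsp.card : ℝ) ≤ 2^n * q^(kk : ℕ) := by rw [← h2]; exact h1
      _ ≤ 2^n * q^(α*(n:ℝ)) := by apply mul_le_mul_of_nonneg_left h3 (by positivity)
  -- card of Bspr
  have hBsprcard : (Bspr.card : ℝ) ≤ Real.sqrt (C*q)^n * q^(α*(n:ℝ)) / ε := by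
    rw [le_div_iff₀ hε0]
    have hsubs : Bspr ⊆ Finset.univ.filter (fun a : Fin n → F => ε < ρ a) := by
      intro a ha
      refine Finset.mem_filter.mpr ⟨Finset.mem_univ _, ?_⟩
      exact ((Finset.mem_filter.mp (Finset.mem_filter.mp ha).1).2).2
    calc (Bspr.card : ℝ) * ε
        ≤ ((Finset.univ.filter (fun a : Fin n → F => ε < ρ a)).card : ℝ) * ε := by
          apply mul_le_mul_of_nonneg_right _ hε0.le
          exact_mod_cast Finset.card_le_card hsubs
      _ ≤ ∑ a : Fin n → F, ρ a := markov_count ρ hρnn ε hε0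
      _ ≤ Real.sqrt (C*q)^n * q^(α*(n:ℝ)) := hSrho
  -- total bound on the union
  have hPU : (ℙ U).toReal ≤ ε := by
    have hsum : (ℙ U).toReal ≤ ∑ a ∈ Bad, (ℙ (O a)).toReal := by
      have h1 : ℙ U ≤ ∑ a ∈ Bad, ℙ (O a) := measure_biUnion_finset_le Bad O
      have h2 : (ℙ U).toReal ≤ (∑ a ∈ Bad, ℙ (O a)).toReal := by
        apply ENNReal.toReal_mono _ h1
        exact ENNReal.sum_ne_top.mpr (fun a _ => measure_ne_top _ _)
      rwa [ENNReal.toReal_sum (fun a _ => measure_ne_top _ _)] at h2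
    have hsplit : ∑ a ∈ Bad, (ℙ (O a)).toReal
        = ∑ a ∈ Bsp, (ℙ (O a)).toReal + ∑ a ∈ Bspr, (ℙ (O a)).toReal := by
      rw [hBsp, hBspr]
      exact (Finset.sum_filter_add_sum_filter_not Bad _ _).symm
    have hbound1 : ∑ a ∈ Bsp, (ℙ (O a)).toReal ≤ (Bsp.card : ℝ) * (C/q)^(6*α*(n:ℝ)) := by
      have := Finset.sum_le_card_nsmul Bsp (fun a => (ℙ (O a)).toReal) ((C/q)^(6*α*(n:ℝ)))
        (fun a ha => hO_sp a ((Finset.mem_filter.mp (Finset.mem_filter.mp ha).1).2).1)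
      rwa [nsmul_eq_mul] at this
    have hbound2 : ∑ a ∈ Bspr, (ℙ (O a)).toReal ≤ (Bspr.card : ℝ) * (C/q)^((1-6*α)*(n:ℝ)) := by
      have := Finset.sum_le_card_nsmul Bspr (fun a => (ℙ (O a)).toReal) ((C/q)^((1-6*α)*(n:ℝ)))
        (fun a ha => hO_spr a (lt_of_not_ge (Finset.mem_filter.mp ha).2))
      rwa [nsmul_eq_mul] at this
    have harith := arith_main C α q n hC hα hα18 hn1 hq1
    have hterm1 : (Bsp.card : ℝ) * (C/q)^(6*α*(n:ℝ))
        ≤ 2^n * q^(α*(n:ℝ)) * (C/q)^(6*α*(n:ℝ)) := by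
      apply mul_le_mul_of_nonneg_right hBspcard (by positivity)
    have hterm2 : (Bspr.card : ℝ) * (C/q)^((1-6*α)*(n:ℝ))
        ≤ (Real.sqrt (C*q)^n * q^(α*(n:ℝ)) / ε) * (C/q)^((1-6*α)*(n:ℝ)) := by
      apply mul_le_mul_of_nonneg_right hBsprcard (by positivity)
    calc (ℙ U).toReal ≤ ∑ a ∈ Bad, (ℙ (O a)).toReal := hsum
      _ = ∑ a ∈ Bsp, (ℙ (O a)).toReal + ∑ a ∈ Bspr, (ℙ (O a)).toReal := hsplit
      _ ≤ 2^n * q^(α*(n:ℝ)) * (C/q)^(6*α*(n:ℝ))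
          + (Real.sqrt (C*q)^n * q^(α*(n:ℝ)) / ε) * (C/q)^((1-6*α)*(n:ℝ)) := by
          have := le_trans hbound1 hterm1
          have := le_trans hbound2 hterm2
          linarith
      _ ≤ ε := harith
  -- conclusion
  suffices hfin : 1 - ε ≤ (ℙ {ω | ∀ a : Fin n → F, a ≠ 0 →
      (∀ j : Fin m, a ⬝ᵥ X (Fin.castSucc j) ω = 0) → ρ a ≤ ε}).toReal by
    exact hfin
  have hsubC : Uᶜ ⊆ {ω | ∀ a : Fin n → F, a ≠ 0 →
      (∀ j : Fin m, a ⬝ᵥ X (Fin.castSucc j) ω = 0) → ρ a ≤ ε} := by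
    intro ω hω
    intro a ha horth
    by_contra hlt
    push_neg at hlt
    have haBad : a ∈ Bad := Finset.mem_filter.mpr ⟨Finset.mem_univ _, ha, hlt⟩
    have hωO : ω ∈ O a := horth
    exact hω (Set.mem_biUnion haBad hωO)
  have hcompl : (ℙ (Uᶜ)).toReal = 1 - (ℙ U).toReal := by
    rw [prob_compl_eq_one_sub hUmeas]
    rw [ENNReal.toReal_sub_of_le prob_le_one ENNReal.one_ne_top]
    simp
  calc 1 - ε ≤ 1 - (ℙ U).toReal := by linarith
    _ = (ℙ (Uᶜ)).toReal := hcompl.symm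
    _ ≤ _ := ENNReal.toReal_mono (measure_ne_top _ _) (measure_mono hsubC)
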